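/- Let W : 𝒳 → 𝒴 → ℝ≥0 be a channel (each W(·|x) a pmf on 𝒴), β a pmf on 𝒳, and P(y) = Σ_x β(x) W(y|x), assumed positive for all y. For γ ∈ [0,1], define J(y) = Σ_x β(x) (W(y|x)/P(y))^{1/(1+γ)}, and set E₀(γ) = −log₂ Σ_y P(y) J(y)^{1+γ}, F(γ) = −log₂ Σ_y P(y) J(y)^γ, G(γ) = −log₂ Σ_y P(y) J(y). Then E₀(γ) ≤ F(γ) + G(γ). -/
import Mathlib


open Finset

/-- For a channel `W`, input pmf `β`, output marginal `P(y) = ∑ x, β x * W x y > 0`,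
and `γ ∈ [0,1]`, with `J(y) = ∑ x, β x * (W x y / P y)^(1/(1+γ))`:
`E₀(γ) ≤ F(γ) + G(γ)`. -/
theorem stmt2 {X Y : Type} [Fintype X] [Fintype Y] [Nonempty X] [Nonempty Y]
    (W : X → Y → ℝ) (hW0 : ∀ x y, 0 ≤ W x y) (hW1 : ∀ x, ∑ y, W x y = 1)
    (β : X → ℝ) (hβ0 : ∀ x, 0 ≤ β x) (hβ1 : ∑ x, β x = 1)
    (hP : ∀ y, 0 < ∑ x, β x * W x y)
    (γ : ℝ) (hγ0 : 0 ≤ γ) (hγ1 : γ ≤ 1) :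
    -Real.logb 2 (∑ y, (∑ x, β x * W x y) *
        ((∑ x, β x * (W x y / (∑ x', β x' * W x' y)) ^ ((1:ℝ)/(1+γ))) ^ (1+γ))) ≤
      (-Real.logb 2 (∑ y, (∑ x, β x * W x y) *
        ((∑ x, β x * (W x y / (∑ x', β x' * W x' y)) ^ ((1:ℝ)/(1+γ))) ^ γ))) +
      (-Real.logb 2 (∑ y, (∑ x, β x * W x y) *
        (∑ x, β x * (W x y / (∑ x', β x' * W x' y)) ^ ((1:ℝ)/(1+γ))))) := by
  set P : Y → ℝ := fun y => ∑ x, β x * W x y with hPdef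
  set J : Y → ℝ := fun y => ∑ x, β x * (W x y / P y) ^ ((1:ℝ)/(1+γ)) with hJdef
  have hPpos : ∀ y, 0 < P y := hP
  have hPsum : ∑ y, P y = 1 := by
    rw [hPdef]
    rw [Finset.sum_comm]
    simp_rw [← Finset.mul_sum, hW1, mul_one, hβ1]
  have hJpos : ∀ y, 0 < J y := by
    intro y
    have := hPpos y
    obtain ⟨x, hx, hxpos⟩ : ∃ x ∈ Finset.univ, 0 < β x * W x y := by
      by_contra h
      push_neg at h
      have : P y ≤ 0 := Finset.sum_nonpos fun x hx => h x hx
      linarith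
    refine Finset.sum_pos' (fun x _ => mul_nonneg (hβ0 x)
      (Real.rpow_nonneg (div_nonneg (hW0 x y) (hPpos y).le) _)) ⟨x, hx, ?_⟩
    have hβx : 0 < β x := by
      rcases lt_or_ge 0 (β x) with h | h
      · exact h
      · nlinarith [hW0 x y]
    have hWx : 0 < W x y := by nlinarith
    exact mul_pos hβx (Real.rpow_pos_of_pos (div_pos hWx (hPpos y)) _)
  set A : ℝ := ∑ y, P y * J y ^ (1 + γ) with hA
  set B : ℝ := ∑ y, P y * J y ^ γ with hB
  set C : ℝ := ∑ y, P y * J y with hC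
  have hApos : 0 < A :=
    Finset.sum_pos (fun y _ => mul_pos (hPpos y) (Real.rpow_pos_of_pos (hJpos y) _))
      univ_nonempty
  have hBpos : 0 < B :=
    Finset.sum_pos (fun y _ => mul_pos (hPpos y) (Real.rpow_pos_of_pos (hJpos y) _))
      univ_nonempty
  have hCpos : 0 < C :=
    Finset.sum_pos (fun y _ => mul_pos (hPpos y) (hJpos y)) univ_nonempty
  -- Jensen (convexity of x ^ (1+γ)) : C ^ (1+γ) ≤ A
  have h1 : C ^ (1 + γ) ≤ A := by
    have := Real.rpow_arith_mean_le_arith_mean_rpow Finset.univ P J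
      (fun y _ => (hPpos y).le) hPsum (fun y _ => (hJpos y).le) (by linarith : (1:ℝ) ≤ 1 + γ)
    exact this
  -- Power mean (concavity of x ^ γ) : B ≤ C ^ γ
  have h2 : B ≤ C ^ γ := by
    rcases eq_or_lt_of_le hγ0 with h0 | h0
    · have : B = 1 := by
        rw [hB]
        simp_rw [← h0, Real.rpow_zero, mul_one]
        exact hPsum
      rw [this, ← h0, Real.rpow_zero]
    · have hp : (1:ℝ) ≤ 1/γ := by
        rw [le_div_iff₀ h0]; linarith
      have := Real.arith_mean_le_rpow_mean Finset.univ P (fun y => J y ^ γ)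
        (fun y _ => (hPpos y).le) hPsum
        (fun y _ => (Real.rpow_pos_of_pos (hJpos y) _).le) hp
      have heq : ∀ y, (J y ^ γ) ^ ((1:ℝ)/γ) = J y := by
        intro y
        rw [← Real.rpow_mul (hJpos y).le, mul_one_div, div_self (ne_of_gt h0), Real.rpow_one]
      simp_rw [heq] at this
      calc B ≤ (∑ y, P y * J y) ^ ((1:ℝ)/(1/γ)) := this
        _ = C ^ γ := by rw [one_div_one_div]
  have hBC : B * C ≤ A := by
    calc B * C ≤ C ^ γ * C := by
          exact mul_le_mul_of_nonneg_right h2 hCpos.le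
      _ = C ^ (1 + γ) := by
          rw [add_comm, Real.rpow_add_one (ne_of_gt hCpos)]
      _ ≤ A := h1
  have hlog : Real.logb 2 B + Real.logb 2 C ≤ Real.logb 2 A := by
    rw [← Real.logb_mul (ne_of_gt hBpos) (ne_of_gt hCpos)]
    exact Real.logb_le_logb_of_le one_lt_two (mul_pos hBpos hCpos) hBC
  linarith
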